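/- Let A₁ and A₂ be unital associative ℂ-algebras each of countable dimension over ℂ, let W₁ be an A₁-module, and let W₂ be a simple A₂-module. If W₁ ⊗_ℂ W₂ is a semisimple module over A₁ ⊗_ℂ A₂, then W₁ is a semisimple A₁-module. (Algebraic core of the converse direction of Theorem 6.3 of the paper: decomposing W₁ ⊗ W₂ = ⊕_i M_i into irreducibles, each M_i has the form W_{i1} ⊗ W₂ for an irreducible A₁-submodule W_{i1} of W₁, and W₁ ≅ ⊕_i W_{i1}, using the Jacobson density theorem in each factor.) -/

import Mathlib

open Cardinal TensorProduct

namespace Thm63Aux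

open Polynomial

universe u_1


theorem li_sub_inv {D : Type*} [DivisionRing D] [Algebra ℂ D] {x : D}
    (H : Transcendental ℂ x) :
    LinearIndependent ℂ fun c : ℂ ↦ (x - algebraMap ℂ D c)⁻¹ := by
  classical
  rw [transcendental_iff] at H
  refine linearIndependent_iff'.2 fun s m hm i hi ↦ ?_
  have hnz (a : ℂ) : x - algebraMap ℂ D a ≠ 0 := fun h ↦
    X_sub_C_ne_zero a <| H (X - C a) (by rw [map_sub, aeval_X, aeval_C, h])
  set b : D := aeval x (s.prod fun j ↦ X - C j) with hb
  have h1 : ∀ i ∈ s, b * (x - algebraMap ℂ D i)⁻¹ =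
      aeval x ((s.erase i).prod fun j ↦ X - C j) := fun i hi ↦ by
    rw [hb, ← s.prod_erase_mul _ hi, map_mul]
    rw [map_sub, aeval_X, aeval_C, mul_inv_cancel_right₀ (hnz i)]
  set p : Polynomial ℂ := s.sum fun i ↦ .C (m i) * (s.erase i).prod fun j ↦ .X - .C j with hp
  have hp0 : aeval x p = 0 := by
    rw [hp, map_sum]
    have : ∀ i ∈ s, aeval x (C (m i) * (s.erase i).prod fun j ↦ X - C j) =
        m i • (b * (x - algebraMap ℂ D i)⁻¹) := fun i hi ↦ by
      rw [map_mul, aeval_C, h1 i hi, ← Algebra.smul_def]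
    rw [Finset.sum_congr rfl this]
    rw [show (∑ i ∈ s, m i • (b * (x - algebraMap ℂ D i)⁻¹)) =
        b * ∑ i ∈ s, m i • (x - algebraMap ℂ D i)⁻¹ by
      rw [Finset.mul_sum]; exact Finset.sum_congr rfl fun i _ ↦ (mul_smul_comm _ _ _).symm]
    rw [hm, mul_zero]
  have hpz : p = 0 := H p hp0
  replace hpz := congrArg (eval i) hpz
  have h2 : ∀ j ∈ s.erase i, m j * ((s.erase j).prod fun c ↦ i - c) = 0 := fun j hj ↦ by
    have hij : i ∈ s.erase j := Finset.mem_erase_of_ne_of_mem (Finset.ne_of_mem_erase hj).symm hi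
    rw [Finset.prod_eq_zero hij (sub_self i), mul_zero]
  rw [hp] at hpz
  simp only [eval_zero, eval_finset_sum, eval_mul, eval_C, eval_prod, eval_sub, eval_X] at hpz
  rw [← s.sum_erase_add _ hi, Finset.sum_eq_zero h2, zero_add] at hpz
  exact eq_zero_of_ne_zero_of_mul_right_eq_zero (Finset.prod_ne_zero_iff.2 fun j hj ↦
    sub_ne_zero.2 (Finset.ne_of_mem_erase hj).symm) hpz

theorem dixmier {D : Type u_1} [DivisionRing D] [Algebra ℂ D]
    (h : Module.rank ℂ D ≤ ℵ₀) : Function.Surjective (algebraMap ℂ D) := by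
  have hint : Algebra.IsIntegral ℂ D := by
    refine ⟨fun x ↦ ?_⟩
    by_contra hx
    have htr : Transcendental ℂ x := fun halg ↦ hx (isAlgebraic_iff_isIntegral.mp halg)
    have li := li_sub_inv htr
    have hc := li.cardinal_lift_le_rank
    rw [mk_complex] at hc
    have h2 := hc.trans (Cardinal.lift_le.mpr h)
    rw [Cardinal.lift_aleph0, ← Cardinal.lift_aleph0.{u_1, 0}, Cardinal.lift_le] at h2
    exact absurd h2 (not_le.mpr Cardinal.aleph0_lt_continuum)
  exact IsAlgClosed.algebraMap_bijective_of_isIntegral.2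

section
variable {A₂ W₂ : Type*} [Ring A₂] [Algebra ℂ A₂]
  [AddCommGroup W₂] [Module ℂ W₂] [Module A₂ W₂] [IsScalarTower ℂ A₂ W₂]

theorem scc2 : SMulCommClass ℂ A₂ W₂ := by
  constructor
  intro c a w
  rw [← algebraMap_smul A₂ c w, ← mul_smul, ← Algebra.commutes, mul_smul, algebraMap_smul]

theorem rank_le_aleph0_surj {M : Type*} {N : Type*} [AddCommGroup M] [Module ℂ M]
    [AddCommGroup N] [Module ℂ N] (f : M →ₗ[ℂ] N) (hs : Function.Surjective f)
    (hM : Module.rank ℂ M ≤ ℵ₀) : Module.rank ℂ N ≤ ℵ₀ := by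
  have h2 := (f.lift_rank_le_of_surjective hs).trans (Cardinal.lift_le.mpr hM)
  rw [Cardinal.lift_aleph0] at h2
  exact Cardinal.lift_le_aleph0.mp h2

theorem rank_le_aleph0_inj {M : Type*} {N : Type*} [AddCommGroup M] [Module ℂ M]
    [AddCommGroup N] [Module ℂ N] (f : M →ₗ[ℂ] N) (hs : Function.Injective f)
    (hN : Module.rank ℂ N ≤ ℵ₀) : Module.rank ℂ M ≤ ℵ₀ := by
  have h2 := (f.lift_rank_le_of_injective hs).trans (Cardinal.lift_le.mpr hN)
  rw [Cardinal.lift_aleph0] at h2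
  exact Cardinal.lift_le_aleph0.mp h2

theorem end_scalar (hA₂ : Module.rank ℂ A₂ ≤ ℵ₀) (hW₂ : IsSimpleModule A₂ W₂)
    (φ : Module.End A₂ W₂) : ∃ c : ℂ, ∀ w, φ w = c • w := by
  classical
  haveI := hW₂
  haveI : SMulCommClass ℂ A₂ W₂ := scc2
  haveI : SMulCommClass A₂ ℂ W₂ := SMulCommClass.symm _ _ _
  haveI : Nontrivial W₂ := IsSimpleModule.nontrivial A₂ W₂
  obtain ⟨w₀, hw₀⟩ := exists_ne (0 : W₂)
  have hrankW : Module.rank ℂ W₂ ≤ ℵ₀ := by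
    have hsurj : Function.Surjective (LinearMap.toSpanSingleton A₂ W₂ w₀) :=
      IsSimpleModule.toSpanSingleton_surjective A₂ hw₀
    let f : A₂ →ₗ[ℂ] W₂ :=
      { toFun := fun a ↦ a • w₀
        map_add' := fun a b ↦ add_smul a b w₀
        map_smul' := fun c a ↦ smul_assoc c a w₀ }
    have : Function.Surjective f := hsurj
    exact rank_le_aleph0_surj f this hA₂
  have hrankD : Module.rank ℂ (Module.End A₂ W₂) ≤ ℵ₀ := by
    let ev : Module.End A₂ W₂ →ₗ[ℂ] W₂ :=
      { toFun := fun ψ ↦ ψ w₀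
        map_add' := fun ψ χ ↦ rfl
        map_smul' := fun c ψ ↦ rfl }
    have hker : ∀ ψ : Module.End A₂ W₂, ψ w₀ = 0 → ψ = 0 := by
      intro ψ h0
      rcases hW₂.1.2 (LinearMap.ker ψ) with hk | hk
      · have : w₀ ∈ LinearMap.ker ψ := LinearMap.mem_ker.mpr h0
        rw [hk] at this
        exact absurd this (by simp [hw₀])
      · exact LinearMap.ker_eq_top.mp hk
    have hinj : Function.Injective ev := by
      intro ψ χ h
      have h0 : (ψ - χ) w₀ = 0 := by
        rw [LinearMap.sub_apply, sub_eq_zero]; exact h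
      exact sub_eq_zero.mp (hker (ψ - χ) h0)
    exact rank_le_aleph0_inj ev hinj hrankW
  obtain ⟨c, hc⟩ := dixmier hrankD φ
  exact ⟨c, fun w ↦ by rw [← hc]; rfl⟩

end

end Thm63Aux

set_option maxHeartbeats 1000000
set_option synthInstance.maxHeartbeats 200000

/-- Algebraic core of the converse direction of Theorem 6.3: for unital associative
ℂ-algebras `A₁`, `A₂` of countable ℂ-dimension, if `W₂` is a simple `A₂`-module and
`W₁ ⊗[ℂ] W₂` is a semisimple `A₁ ⊗[ℂ] A₂`-module (for the componentwise action),
then `W₁` is a semisimple `A₁`-module. -/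
theorem isSemisimpleModule_left_of_tensorProduct {A₁ A₂ W₁ W₂ : Type*}
    [Ring A₁] [Algebra ℂ A₁] [Ring A₂] [Algebra ℂ A₂]
    [AddCommGroup W₁] [Module ℂ W₁] [Module A₁ W₁] [IsScalarTower ℂ A₁ W₁]
    [AddCommGroup W₂] [Module ℂ W₂] [Module A₂ W₂] [IsScalarTower ℂ A₂ W₂]
    (hA₁ : Module.rank ℂ A₁ ≤ ℵ₀) (hA₂ : Module.rank ℂ A₂ ≤ ℵ₀)
    (hW₂ : IsSimpleModule A₂ W₂)
    [Module (A₁ ⊗[ℂ] A₂) (W₁ ⊗[ℂ] W₂)]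
    (hsmul : ∀ (a₁ : A₁) (a₂ : A₂) (w₁ : W₁) (w₂ : W₂),
      (a₁ ⊗ₜ[ℂ] a₂) • (w₁ ⊗ₜ[ℂ] w₂) = (a₁ • w₁) ⊗ₜ[ℂ] (a₂ • w₂))
    (hss : IsSemisimpleModule (A₁ ⊗[ℂ] A₂) (W₁ ⊗[ℂ] W₂)) :
    IsSemisimpleModule A₁ W₁ := by
  classical
  haveI := hW₂
  haveI sccW₂ : SMulCommClass ℂ A₂ W₂ := Thm63Aux.scc2
  haveI sccW₁ : SMulCommClass ℂ A₁ W₁ := Thm63Aux.scc2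
  haveI : Nontrivial W₂ := IsSimpleModule.nontrivial A₂ W₂
  obtain ⟨w₀, hw₀⟩ := exists_ne (0 : W₂)
  -- bases
  let b₁ := Module.Basis.ofVectorSpace ℂ W₁
  let b₂ := Module.Basis.ofVectorSpace ℂ W₂
  let ι₁ := Module.Basis.ofVectorSpaceIndex ℂ W₁
  let ι₂ := Module.Basis.ofVectorSpaceIndex ℂ W₂
  let e₁ : (W₁ ⊗[ℂ] W₂) ≃ₗ[ℂ] (ι₂ →₀ W₁) :=
    (TensorProduct.congr (LinearEquiv.refl ℂ W₁) b₂.repr).trans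
      (TensorProduct.finsuppScalarRight ℂ ℂ W₁ ι₂)
  let e₂ : (W₁ ⊗[ℂ] W₂) ≃ₗ[ℂ] (ι₁ →₀ W₂) :=
    (TensorProduct.congr b₁.repr (LinearEquiv.refl ℂ W₂)).trans
      (TensorProduct.finsuppScalarLeft ℂ W₂ ι₁)
  have he₁ : ∀ (w₁ : W₁) (w₂ : W₂) (i : ι₂), e₁ (w₁ ⊗ₜ[ℂ] w₂) i = b₂.repr w₂ i • w₁ := by
    intro w₁ w₂ i
    simp [e₁, TensorProduct.finsuppScalarRight_apply_tmul_apply]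
  have he₂ : ∀ (w₁ : W₁) (w₂ : W₂) (i : ι₁), e₂ (w₁ ⊗ₜ[ℂ] w₂) i = b₁.repr w₁ i • w₂ := by
    intro w₁ w₂ i
    simp [e₂, TensorProduct.finsuppScalarLeft_apply_tmul_apply]
  -- compatibility of the ℂ-action with the given module structure
  have hC : ∀ (c : ℂ) (x : W₁ ⊗[ℂ] W₂), (algebraMap ℂ (A₁ ⊗[ℂ] A₂) c) • x = c • x := by
    intro c x
    induction x using TensorProduct.induction_on with
    | zero => rw [smul_zero, smul_zero]
    | tmul w₁ w₂ =>
        rw [Algebra.TensorProduct.algebraMap_apply, hsmul, algebraMap_smul,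
          TensorProduct.smul_tmul', one_smul]
    | add x y hx hy => rw [smul_add, smul_add, hx, hy]
  -- the action of any element of the tensor algebra is ℂ-linear
  let μ : (A₁ ⊗[ℂ] A₂) → (W₁ ⊗[ℂ] W₂) →ₗ[ℂ] (W₁ ⊗[ℂ] W₂) := fun r =>
    { toFun := fun x => r • x
      map_add' := fun x y => smul_add r x y
      map_smul' := fun c x => by
        simp only [RingHom.id_apply]
        rw [← hC c x, ← mul_smul, ← Algebra.commutes, mul_smul, hC] }
  -- the span of pure tensors with first component in P
  let F : Submodule ℂ W₁ → Submodule ℂ (W₁ ⊗[ℂ] W₂) := fun P =>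
    Submodule.span ℂ {x | ∃ v ∈ P, ∃ w : W₂, v ⊗ₜ[ℂ] w = x}
  have hFgen : ∀ (P : Submodule ℂ W₁) (v : W₁), v ∈ P → ∀ w : W₂, v ⊗ₜ[ℂ] w ∈ F P :=
    fun P v hv w => Submodule.subset_span ⟨v, hv, w, rfl⟩
  -- coordinates in the W₂ direction
  let L : ι₂ → ((W₁ ⊗[ℂ] W₂) →ₗ[ℂ] W₁) := fun i => (Finsupp.lapply i) ∘ₗ e₁.toLinearMap
  have hL : ∀ (i : ι₂) (w₁ : W₁) (w₂ : W₂), L i (w₁ ⊗ₜ[ℂ] w₂) = b₂.repr w₂ i • w₁ := by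
    intro i w₁ w₂; exact he₁ w₁ w₂ i
  have hFL : ∀ (P : Submodule ℂ W₁) (i : ι₂) (x : W₁ ⊗[ℂ] W₂), x ∈ F P → L i x ∈ P := by
    intro P i x hx
    have : F P ≤ P.comap (L i) := by
      apply Submodule.span_le.mpr
      rintro _ ⟨v, hv, w, rfl⟩
      simp only [Set.mem_setOf_eq, SetLike.mem_coe, Submodule.mem_comap]
      rw [hL]
      exact P.smul_mem _ hv
    exact this hx
  -- stability under the action
  have hFstab : ∀ (P : Submodule ℂ W₁), (∀ (a₁ : A₁) (v : W₁), v ∈ P → a₁ • v ∈ P) →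
      ∀ (r : A₁ ⊗[ℂ] A₂) (x : W₁ ⊗[ℂ] W₂), x ∈ F P → r • x ∈ F P := by
    intro P hP r
    induction r using TensorProduct.induction_on with
    | zero => intro x hx; rw [zero_smul]; exact (F P).zero_mem
    | tmul a₁ a₂ =>
        intro x hx
        have hle : F P ≤ (F P).comap (μ (a₁ ⊗ₜ[ℂ] a₂)) := by
          apply Submodule.span_le.mpr
          rintro _ ⟨v, hv, w, rfl⟩
          simp only [Set.mem_setOf_eq, SetLike.mem_coe, Submodule.mem_comap]
          show (a₁ ⊗ₜ[ℂ] a₂) • (v ⊗ₜ[ℂ] w) ∈ F P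
          rw [hsmul]
          exact hFgen P _ (hP a₁ v hv) _
        exact hle hx
    | add r r' hr hr' =>
        intro x hx
        rw [add_smul]
        exact (F P).add_mem (hr x hx) (hr' x hx)
  -- A₂-module structure on the tensor product
  letI iA₂T : Module A₂ (W₁ ⊗[ℂ] W₂) :=
    Module.compHom _ (Algebra.TensorProduct.includeRight (R := ℂ) (A := A₁) (B := A₂)).toRingHom
  have hA₂smul : ∀ (a₂ : A₂) (x : W₁ ⊗[ℂ] W₂), a₂ • x = ((1 : A₁) ⊗ₜ[ℂ] a₂) • x :=
    fun _ _ => rfl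
  have hA₂tmul : ∀ (a₂ : A₂) (w₁ : W₁) (w₂ : W₂),
      a₂ • (w₁ ⊗ₜ[ℂ] w₂) = w₁ ⊗ₜ[ℂ] (a₂ • w₂) := by
    intro a₂ w₁ w₂
    rw [hA₂smul, hsmul, one_smul]
  -- coordinates in the W₁ direction, as A₂-linear maps
  have hπsmul : ∀ (i : ι₁) (a₂ : A₂) (x : W₁ ⊗[ℂ] W₂), e₂ (a₂ • x) i = a₂ • (e₂ x i) := by
    intro i a₂ x
    induction x using TensorProduct.induction_on with
    | zero => rw [smul_zero, map_zero]; simp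
    | tmul w₁ w₂ =>
        rw [hA₂tmul, he₂, he₂, smul_comm]
    | add x y hx hy =>
        rw [smul_add, map_add, map_add, Finsupp.add_apply, Finsupp.add_apply, hx, hy, smul_add]
  let π : ι₁ → ((W₁ ⊗[ℂ] W₂) →ₗ[A₂] W₂) := fun i =>
    { toFun := fun x => e₂ x i
      map_add' := fun x y => by simp only [map_add, Finsupp.add_apply]
      map_smul' := fun a₂ x => hπsmul i a₂ x }
  -- e₂ as an A₂-linear equivalence
  let e₂' : (W₁ ⊗[ℂ] W₂) ≃ₗ[A₂] (ι₁ →₀ W₂) :=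
    { toFun := e₂
      map_add' := e₂.map_add
      map_smul' := fun a₂ x => Finsupp.ext fun i => by
        simp only [RingHom.id_apply, Finsupp.smul_apply]
        exact hπsmul i a₂ x
      invFun := e₂.symm
      left_inv := e₂.left_inv
      right_inv := e₂.right_inv }
  -- semisimplicity of the tensor product over A₂
  haveI hssFin : IsSemisimpleModule A₂ (ι₁ →₀ W₂) := by
    apply IsSemisimpleModule.of_sSup_simples_eq_top
    rw [eq_top_iff, ← Finsupp.iSup_lsingle_range]
    apply iSup_le
    intro i
    apply le_sSup
    have hinj : Function.Injective (Finsupp.lsingle (α := ι₁) (M := W₂) (R := A₂) i) :=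
      Finsupp.single_injective i
    exact IsSimpleModule.congr (LinearEquiv.ofInjective _ hinj).symm
  haveI hssT : IsSemisimpleModule A₂ (W₁ ⊗[ℂ] W₂) := IsSemisimpleModule.congr e₂'
  -- every simple A₂-submodule of the tensor product is of the form v ⊗ W₂
  have hatom : ∀ S : Submodule A₂ (W₁ ⊗[ℂ] W₂), IsSimpleModule A₂ ↥S →
      ∃ v : W₁, (∀ w : W₂, v ⊗ₜ[ℂ] w ∈ S) ∧ ∀ y ∈ S, ∃ w : W₂, y = v ⊗ₜ[ℂ] w := by
    intro S hS
    haveI := hS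
    haveI : Nontrivial ↥S := IsSimpleModule.nontrivial A₂ ↥S
    have hSbot : S ≠ ⊥ := Submodule.nontrivial_iff_ne_bot.mp this
    obtain ⟨x, hxS, hx0⟩ := Submodule.ne_bot_iff S |>.mp hSbot
    obtain ⟨i₀, hi₀⟩ : ∃ i : ι₁, e₂ x i ≠ 0 := by
      by_contra h
      push_neg at h
      exact hx0 (by
        have : e₂ x = 0 := Finsupp.ext h
        simpa using e₂.map_eq_zero_iff.mp this)
    let g : ι₁ → (↥S →ₗ[A₂] W₂) := fun i => (π i) ∘ₗ S.subtype
    have hgx : ∀ i : ι₁, g i ⟨x, hxS⟩ = e₂ x i := fun i => rfl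
    have hg₀ : g i₀ ≠ 0 := by
      intro h
      apply hi₀
      rw [← hgx i₀, h]
      rfl
    have hbij := LinearMap.bijective_of_ne_zero hg₀
    let eqv : ↥S ≃ₗ[A₂] W₂ := LinearEquiv.ofBijective (g i₀) hbij
    have heqv : ∀ y' : ↥S, eqv y' = g i₀ y' := fun _ => rfl
    have hscal : ∀ i : ι₁, ∃ c : ℂ, ∀ w : W₂, (g i) (eqv.symm w) = c • w := by
      intro i
      obtain ⟨c, hc⟩ := Thm63Aux.end_scalar hA₂ hW₂ ((g i) ∘ₗ (eqv.symm.toLinearMap))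
      exact ⟨c, fun w => hc w⟩
    choose c hc using hscal
    have hgy : ∀ (i : ι₁) (y' : ↥S), g i y' = c i • eqv y' := by
      intro i y'
      have h1 := hc i (eqv y')
      rwa [eqv.symm_apply_apply] at h1
    have hcyc : ∀ y' : ↥S, ∃ a : A₂, a • x = (y' : W₁ ⊗[ℂ] W₂) := by
      intro y'
      have hx' : (⟨x, hxS⟩ : ↥S) ≠ 0 := fun h => hx0 (by simpa using congrArg Subtype.val h)
      have hsp := IsSimpleModule.span_singleton_eq_top (R := A₂) (M := ↥S) hx'
      have : y' ∈ Submodule.span A₂ {(⟨x, hxS⟩ : ↥S)} := by rw [hsp]; trivial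
      obtain ⟨a, ha⟩ := Submodule.mem_span_singleton.mp this
      exact ⟨a, by simpa using congrArg Subtype.val ha⟩
    have hczero : ∀ i : ι₁, e₂ x i = 0 → c i = 0 := by
      intro i hzero
      have hgi : ∀ y' : ↥S, g i y' = 0 := by
        intro y'
        obtain ⟨a, ha⟩ := hcyc y'
        have : g i y' = e₂ (y' : W₁ ⊗[ℂ] W₂) i := rfl
        rw [this, ← ha, hπsmul, hzero, smul_zero]
      have h0 : c i • w₀ = 0 := by rw [← hc i w₀, hgi]
      by_contra hci
      exact hw₀ (by
        have := congrArg (fun z => (c i)⁻¹ • z) h0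
        simpa [smul_smul, inv_mul_cancel₀ hci] using this)
    let f₀ : ↑ι₁ →₀ ℂ := Finsupp.onFinset (e₂ x).support (fun i => c i)
      (fun i hci => Finsupp.mem_support_iff.mpr (fun h => hci (hczero i h)))
    let v : W₁ := b₁.repr.symm f₀
    have hvrep : ∀ i : ι₁, b₁.repr v i = c i := by
      intro i
      show (b₁.repr (b₁.repr.symm f₀)) i = c i
      rw [b₁.repr.apply_symm_apply]
      rfl
    have hkey : ∀ y' : ↥S, (y' : W₁ ⊗[ℂ] W₂) = v ⊗ₜ[ℂ] (eqv y') := by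
      intro y'
      apply e₂.injective
      ext i
      rw [he₂ v (eqv y') i, hvrep i]
      have : e₂ (y' : W₁ ⊗[ℂ] W₂) i = g i y' := rfl
      rw [this, hgy i y']
    refine ⟨v, fun w => ?_, fun y hy => ?_⟩
    · have := hkey (eqv.symm w)
      rw [eqv.apply_symm_apply] at this
      rw [← this]
      exact (eqv.symm w).2
    · exact ⟨eqv ⟨y, hy⟩, hkey ⟨y, hy⟩⟩
  -- structure of (A₁ ⊗ A₂)-submodules of the tensor product
  have hstruct : ∀ M : Submodule (A₁ ⊗[ℂ] A₂) (W₁ ⊗[ℂ] W₂), ∃ U : Submodule A₁ W₁,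
      (∀ v ∈ U, ∀ w : W₂, v ⊗ₜ[ℂ] w ∈ M) ∧
      (M : Set (W₁ ⊗[ℂ] W₂)) ⊆ (F (U.restrictScalars ℂ) : Set (W₁ ⊗[ℂ] W₂)) := by
    intro M
    let U : Submodule A₁ W₁ :=
      { carrier := {v | ∀ w : W₂, v ⊗ₜ[ℂ] w ∈ M}
        add_mem' := fun hv hv' w => by rw [add_tmul]; exact M.add_mem (hv w) (hv' w)
        zero_mem' := fun w => by rw [zero_tmul]; exact M.zero_mem
        smul_mem' := fun a₁ v hv => fun w => by
          have h := M.smul_mem (a₁ ⊗ₜ[ℂ] (1 : A₂)) (hv w)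
          rwa [hsmul, one_smul] at h }
    refine ⟨U, fun v hv w => hv w, ?_⟩
    have hUmem : ∀ v, v ∈ U.restrictScalars ℂ ↔ ∀ w : W₂, v ⊗ₜ[ℂ] w ∈ M := fun v => Iff.rfl
    let Msub : Submodule A₂ (W₁ ⊗[ℂ] W₂) :=
      { carrier := M
        add_mem' := fun h h' => M.add_mem h h'
        zero_mem' := M.zero_mem
        smul_mem' := fun a₂ x hx => by rw [hA₂smul]; exact M.smul_mem _ hx }
    haveI : IsSemisimpleModule A₂ ↥Msub := IsSemisimpleModule.submodule (R := A₂) (M := W₁ ⊗[ℂ] W₂)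
    let FU' : Submodule A₂ (W₁ ⊗[ℂ] W₂) :=
      { carrier := F (U.restrictScalars ℂ)
        add_mem' := fun h h' => (F (U.restrictScalars ℂ)).add_mem h h'
        zero_mem' := (F (U.restrictScalars ℂ)).zero_mem
        smul_mem' := fun a₂ x hx => by
          rw [hA₂smul]
          exact hFstab _ (fun a₁ v hv => U.smul_mem a₁ hv) _ x hx }
    intro x hx
    have hle : sSup {p : Submodule A₂ ↥Msub | IsSimpleModule A₂ ↥p} ≤
        FU'.comap Msub.subtype := by
      apply sSup_le
      intro p hp
      rw [← Submodule.map_le_iff_le_comap]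
      have hsimple : IsSimpleModule A₂ ↥(Submodule.map Msub.subtype p) := by
        haveI : IsSimpleModule A₂ ↥p := hp
        exact IsSimpleModule.congr (R := A₂) (N := ↥p)
          ((Submodule.equivMapOfInjective Msub.subtype (Submodule.injective_subtype Msub) p).symm)
      obtain ⟨v, hv1, hv2⟩ := hatom _ hsimple
      have hvU : v ∈ U := by
        intro w
        exact (Submodule.map_subtype_le Msub p) (hv1 w)
      intro y hy
      obtain ⟨w, rfl⟩ := hv2 y hy
      exact hFgen _ v hvU w
    have hxtop : (⟨x, hx⟩ : ↥Msub) ∈ sSup {p : Submodule A₂ ↥Msub | IsSimpleModule A₂ ↥p} := by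
      rw [IsSemisimpleModule.sSup_simples_eq_top A₂ ↥Msub]; trivial
    exact hle hxtop
  -- final assembly: the submodule lattice of W₁ is complemented
  refine { exists_isCompl := fun N => ?_ }
  let PN := N.restrictScalars ℂ
  let MN : Submodule (A₁ ⊗[ℂ] A₂) (W₁ ⊗[ℂ] W₂) :=
    { carrier := F PN
      add_mem' := fun h h' => (F PN).add_mem h h'
      zero_mem' := (F PN).zero_mem
      smul_mem' := fun r x hx => hFstab PN (fun a₁ v hv => N.smul_mem a₁ hv) r x hx }
  obtain ⟨M', hMN⟩ := hss.exists_isCompl MN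
  obtain ⟨U, hU1, hU2⟩ := hstruct M'
  obtain ⟨i0, hi0⟩ : ∃ i : ι₂, b₂.repr w₀ i ≠ 0 := by
    by_contra h
    push_neg at h
    exact hw₀ (by simpa using b₂.repr.map_eq_zero_iff.mp (Finsupp.ext h))
  refine ⟨U, IsCompl.of_eq ?_ ?_⟩
  · rw [eq_bot_iff]
    intro v hv
    have h1 : v ⊗ₜ[ℂ] w₀ ∈ MN := hFgen PN v hv.1 w₀
    have h2 : v ⊗ₜ[ℂ] w₀ ∈ M' := hU1 v hv.2 w₀
    have h0 : v ⊗ₜ[ℂ] w₀ = 0 := by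
      have hm : v ⊗ₜ[ℂ] w₀ ∈ MN ⊓ M' := ⟨h1, h2⟩
      rwa [hMN.inf_eq_bot, Submodule.mem_bot] at hm
    have hL0 : b₂.repr w₀ i0 • v = 0 := by
      have := congrArg (L i0) h0
      rwa [hL, map_zero] at this
    have hv0 : v = 0 := by
      have := congrArg (fun z => (b₂.repr w₀ i0)⁻¹ • z) hL0
      simpa [smul_smul, inv_mul_cancel₀ hi0] using this
    simpa [hv0] using Submodule.zero_mem ⊥
  · rw [eq_top_iff]
    intro v _
    have hvtop : v ⊗ₜ[ℂ] w₀ ∈ MN ⊔ M' := by rw [hMN.sup_eq_top]; trivial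
    obtain ⟨y, hy, z, hz, hyz⟩ := Submodule.mem_sup.mp hvtop
    have hyN : L i0 y ∈ PN := hFL PN i0 y hy
    have hzU : L i0 z ∈ U.restrictScalars ℂ := hFL (U.restrictScalars ℂ) i0 z (hU2 hz)
    have hsum : b₂.repr w₀ i0 • v = L i0 y + L i0 z := by
      rw [← map_add, hyz, hL]
    have hrep : v = (b₂.repr w₀ i0)⁻¹ • L i0 y + (b₂.repr w₀ i0)⁻¹ • L i0 z := by
      rw [← smul_add, ← hsum, smul_smul, inv_mul_cancel₀ hi0, one_smul]
    rw [hrep]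
    exact Submodule.add_mem_sup
      (N.smul_of_tower_mem _ hyN)
      (U.smul_of_tower_mem _ hzU)
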